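/- Let g₁ : ℝ² → ℂ satisfy g₁(x+m, y+n) = (−1)^{mn} e^{πi(nx − my)} g₁(x,y) for all (m,n) ∈ ℤ²; let g₂ : ℝ⁴ → ℂ satisfy g₂(s+m₁, t+n₁, x+m₂, y+n₂) = (−1)^{m₁n₁+m₂n₂} e^{πi(n₁s − m₁t + n₂x − m₂y)} g₂(s,t,x,y) for all (m₁,n₁,m₂,n₂) ∈ ℤ⁴; and let g₃ : ℝ⁴ → ℂ satisfy the conjugate relation g₃(s+m₁, t+n₁, x+m₂, y+n₂) = (−1)^{m₁n₁+m₂n₂} e^{−πi(n₁s − m₁t + n₂x − m₂y)} g₃(s,t,x,y). With E(x₀₁,…,x₂₃) = (x₀₂+x₁₃−x₀₃−x₁₂, x₀₂+x₁₃−x₀₁−x₂₃), π₁(x₀₁,…,x₂₃) = (x₀₃−x₂₃, x₀₂−x₀₃, x₀₂−x₁₂, x₀₁−x₀₂), and π₂(x₀₁,…,x₂₃) = (x₁₃−x₂₃, x₁₂−x₁₃, x₀₃−x₁₃, x₀₁−x₀₃), the function x ↦ g₁(E(x)) · g₂(π₁(x)) · g₃(π₂(x)) on ℝ⁶ is invariant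 under translation by every vector of ℤ⁶, hence descends to a function on the torus (ℝ/ℤ)⁶. -/
import Mathlib


open Complex

/-- If `g₁` is quasi-periodic with multiplier
`φ((m,n),(x,y)) = (−1)^{mn} e^{πi(nx−my)}` (a section of `L`), `g₂` is doubly
quasi-periodic (a section of `L⊠L`), and `g₃` satisfies the conjugate relation
(a section of `L*⊠L*`), then with
`E(x) = (x₀₂+x₁₃−x₀₃−x₁₂, x₀₂+x₁₃−x₀₁−x₂₃)`,
`π₁(x) = (x₀₃−x₂₃, x₀₂−x₀₃, x₀₂−x₁₂, x₀₁−x₀₂)`, and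
`π₂(x) = (x₁₃−x₂₃, x₁₂−x₁₃, x₀₃−x₁₃, x₀₁−x₀₃)`,
the function `x ↦ g₁(E(x)) · g₂(π₁(x)) · g₃(π₂(x))` on `ℝ⁶` is invariant under
translation by every vector of `ℤ⁶`, hence descends to the torus `(ℝ/ℤ)⁶`. -/
theorem edge_face_integrand_periodic
    (g₁ : ℝ → ℝ → ℂ) (g₂ g₃ : ℝ → ℝ → ℝ → ℝ → ℂ)
    (h₁ : ∀ (m n : ℤ) (x y : ℝ),
      g₁ (x + m) (y + n) =
        (-1 : ℂ) ^ (m * n) *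
          Complex.exp (Real.pi * Complex.I * ((n : ℂ) * (x : ℂ) - (m : ℂ) * (y : ℂ))) *
          g₁ x y)
    (h₂ : ∀ (m₁ n₁ m₂ n₂ : ℤ) (s t x y : ℝ),
      g₂ (s + m₁) (t + n₁) (x + m₂) (y + n₂) =
        (-1 : ℂ) ^ (m₁ * n₁ + m₂ * n₂) *
          Complex.exp (Real.pi * Complex.I *
            ((n₁ : ℂ) * (s : ℂ) - (m₁ : ℂ) * (t : ℂ) +
             (n₂ : ℂ) * (x : ℂ) - (m₂ : ℂ) * (y : ℂ))) *
          g₂ s t x y)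
    (h₃ : ∀ (m₁ n₁ m₂ n₂ : ℤ) (s t x y : ℝ),
      g₃ (s + m₁) (t + n₁) (x + m₂) (y + n₂) =
        (-1 : ℂ) ^ (m₁ * n₁ + m₂ * n₂) *
          Complex.exp (-(Real.pi * Complex.I *
            ((n₁ : ℂ) * (s : ℂ) - (m₁ : ℂ) * (t : ℂ) +
             (n₂ : ℂ) * (x : ℂ) - (m₂ : ℂ) * (y : ℂ)))) *
          g₃ s t x y) :
    ∀ (k01 k02 k03 k12 k13 k23 : ℤ) (x01 x02 x03 x12 x13 x23 : ℝ),
      g₁ ((x02 + k02) + (x13 + k13) - (x03 + k03) - (x12 + k12))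
          ((x02 + k02) + (x13 + k13) - (x01 + k01) - (x23 + k23)) *
        g₂ ((x03 + k03) - (x23 + k23)) ((x02 + k02) - (x03 + k03))
          ((x02 + k02) - (x12 + k12)) ((x01 + k01) - (x02 + k02)) *
        g₃ ((x13 + k13) - (x23 + k23)) ((x12 + k12) - (x13 + k13))
          ((x03 + k03) - (x13 + k13)) ((x01 + k01) - (x03 + k03)) =
      g₁ (x02 + x13 - x03 - x12) (x02 + x13 - x01 - x23) *
        g₂ (x03 - x23) (x02 - x03) (x02 - x12) (x01 - x02) *
        g₃ (x13 - x23) (x12 - x13) (x03 - x13) (x01 - x03) := by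
  intro k01 k02 k03 k12 k13 k23 x01 x02 x03 x12 x13 x23
  have e1 : (x02 + k02) + (x13 + k13) - (x03 + k03) - (x12 + k12)
      = (x02 + x13 - x03 - x12) + ((k02 + k13 - k03 - k12 : ℤ) : ℝ) := by push_cast; ring
  have e2 : (x02 + k02) + (x13 + k13) - (x01 + k01) - (x23 + k23)
      = (x02 + x13 - x01 - x23) + ((k02 + k13 - k01 - k23 : ℤ) : ℝ) := by push_cast; ring
  have e3 : (x03 + k03) - (x23 + k23) = (x03 - x23) + ((k03 - k23 : ℤ) : ℝ) := by
    push_cast; ring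
  have e4 : (x02 + k02) - (x03 + k03) = (x02 - x03) + ((k02 - k03 : ℤ) : ℝ) := by
    push_cast; ring
  have e5 : (x02 + k02) - (x12 + k12) = (x02 - x12) + ((k02 - k12 : ℤ) : ℝ) := by
    push_cast; ring
  have e6 : (x01 + k01) - (x02 + k02) = (x01 - x02) + ((k01 - k02 : ℤ) : ℝ) := by
    push_cast; ring
  have e7 : (x13 + k13) - (x23 + k23) = (x13 - x23) + ((k13 - k23 : ℤ) : ℝ) := by
    push_cast; ring
  have e8 : (x12 + k12) - (x13 + k13) = (x12 - x13) + ((k12 - k13 : ℤ) : ℝ) := by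
    push_cast; ring
  have e9 : (x03 + k03) - (x13 + k13) = (x03 - x13) + ((k03 - k13 : ℤ) : ℝ) := by
    push_cast; ring
  have e10 : (x01 + k01) - (x03 + k03) = (x01 - x03) + ((k01 - k03 : ℤ) : ℝ) := by
    push_cast; ring
  rw [e1, e2, e3, e4, e5, e6, e7, e8, e9, e10,
    h₁ (k02 + k13 - k03 - k12) (k02 + k13 - k01 - k23),
    h₂ (k03 - k23) (k02 - k03) (k02 - k12) (k01 - k02),
    h₃ (k13 - k23) (k12 - k13) (k03 - k13) (k01 - k03)]
  set G := g₁ (x02 + x13 - x03 - x12) (x02 + x13 - x01 - x23) *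
    g₂ (x03 - x23) (x02 - x03) (x02 - x12) (x01 - x02) *
    g₃ (x13 - x23) (x12 - x13) (x03 - x13) (x01 - x03) with hG
  set E1 : ℤ := (k02 + k13 - k03 - k12) * (k02 + k13 - k01 - k23) with hE1
  set E2 : ℤ := (k03 - k23) * (k02 - k03) + (k02 - k12) * (k01 - k02) with hE2
  set E3 : ℤ := (k13 - k23) * (k12 - k13) + (k03 - k13) * (k01 - k03) with hE3
  have hA : (-1 : ℂ) ^ E1 * (-1 : ℂ) ^ E2 * (-1 : ℂ) ^ E3 = 1 := by
    rw [← zpow_add₀ (by norm_num : (-1 : ℂ) ≠ 0),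
        ← zpow_add₀ (by norm_num : (-1 : ℂ) ≠ 0)]
    have hev : Even (E1 + E2 + E3) := by
      refine ⟨k02 * k13 - k02 * k23 - k01 * k13 + k01 * k03 + k03 * k23 - k03 * k03, ?_⟩
      rw [hE1, hE2, hE3]; ring
    exact hev.neg_one_zpow
  set T1 : ℂ := Real.pi * Complex.I *
    (((k02 + k13 - k01 - k23 : ℤ) : ℂ) * ((x02 + x13 - x03 - x12 : ℝ) : ℂ) -
     ((k02 + k13 - k03 - k12 : ℤ) : ℂ) * ((x02 + x13 - x01 - x23 : ℝ) : ℂ)) with hT1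
  set T2 : ℂ := Real.pi * Complex.I *
    (((k02 - k03 : ℤ) : ℂ) * ((x03 - x23 : ℝ) : ℂ) -
     ((k03 - k23 : ℤ) : ℂ) * ((x02 - x03 : ℝ) : ℂ) +
     ((k01 - k02 : ℤ) : ℂ) * ((x02 - x12 : ℝ) : ℂ) -
     ((k02 - k12 : ℤ) : ℂ) * ((x01 - x02 : ℝ) : ℂ)) with hT2
  set T3 : ℂ := -(Real.pi * Complex.I *
    (((k12 - k13 : ℤ) : ℂ) * ((x13 - x23 : ℝ) : ℂ) -
     ((k13 - k23 : ℤ) : ℂ) * ((x12 - x13 : ℝ) : ℂ) +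
     ((k01 - k03 : ℤ) : ℂ) * ((x03 - x13 : ℝ) : ℂ) -
     ((k03 - k13 : ℤ) : ℂ) * ((x01 - x03 : ℝ) : ℂ))) with hT3
  have hB : Complex.exp T1 * Complex.exp T2 * Complex.exp T3 = 1 := by
    rw [← Complex.exp_add, ← Complex.exp_add]
    have : T1 + T2 + T3 = 0 := by
      rw [hT1, hT2, hT3]; push_cast; ring
    rw [this, Complex.exp_zero]
  calc ((-1 : ℂ) ^ E1 * Complex.exp T1 *
          g₁ (x02 + x13 - x03 - x12) (x02 + x13 - x01 - x23)) *
        ((-1 : ℂ) ^ E2 * Complex.exp T2 *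
          g₂ (x03 - x23) (x02 - x03) (x02 - x12) (x01 - x02)) *
        ((-1 : ℂ) ^ E3 * Complex.exp T3 *
          g₃ (x13 - x23) (x12 - x13) (x03 - x13) (x01 - x03))
      = ((-1 : ℂ) ^ E1 * (-1 : ℂ) ^ E2 * (-1 : ℂ) ^ E3) *
        (Complex.exp T1 * Complex.exp T2 * Complex.exp T3) * G := by rw [hG]; ring
    _ = G := by rw [hA, hB]; ring
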